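/- arXiv:1705.10833 — 7 statements merged into one kernel-verified Lean document; each statement's English description precedes it below -/
import Mathlib

section
/- Let D be a finite distributive lattice with exactly two coatoms c_ℓ and c_r, both of which are join-reducible, and let e = c_ℓ ∧ c_r. Then e is covered by c_ℓ and e is covered by c_r. -/
/-- An element of a lattice is join-reducible if it is the join of two strictly
smaller elements. -/
def JoinReducible {D : Type*} [Lattice D] (c : D) : Prop :=
  ∃ a b : D, a < c ∧ b < c ∧ a ⊔ b = c

lemma covby_aux {D : Type*} [DistribLattice D] [BoundedOrder D]
    (cl cr : D) (hne : cl ≠ cr) (hcl : IsCoatom cl) (hcr : IsCoatom cr) :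
    (cl ⊓ cr) ⋖ cl := by
  have hlt : cl ⊓ cr < cl := by
    rcases lt_or_eq_of_le (inf_le_left : cl ⊓ cr ≤ cl) with h | h
    · exact h
    · exfalso
      have hle : cl ≤ cr := by rw [← h]; exact inf_le_right
      rcases lt_or_eq_of_le hle with h' | h'
      · exact hcr.1 (hcl.2 cr h')
      · exact hne h'
  refine ⟨hlt, ?_⟩
  intro z hz hzc
  have hzle : z ≤ cl := hzc.le
  have hzncr : ¬ z ≤ cr := fun h => absurd (le_inf hzle h) (not_le_of_gt hz)
  have htop : z ⊔ cr = ⊤ := hcr.2 _ (lt_of_le_of_ne le_sup_right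
    (fun h => hzncr (h ▸ le_sup_left)))
  have : cl = z := by
    calc cl = cl ⊓ (z ⊔ cr) := by rw [htop, inf_top_eq]
    _ = (cl ⊓ z) ⊔ (cl ⊓ cr) := inf_sup_left cl z cr
    _ = z ⊔ (cl ⊓ cr) := by rw [inf_eq_right.mpr hzle]
    _ = z := sup_eq_left.mpr (le_of_lt hz)
  exact absurd this.symm (ne_of_lt hzc)

/-- If a finite distributive lattice has exactly two coatoms `cl` and `cr`, both
join-reducible, and `e = cl ⊓ cr`, then `e ⋖ cl` and `e ⋖ cr`. -/
theorem stmt_2 {D : Type*} [DistribLattice D] [Fintype D] [BoundedOrder D]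
    (cl cr : D) (hne : cl ≠ cr) (hcl : IsCoatom cl) (hcr : IsCoatom cr)
    (honly : ∀ x : D, IsCoatom x → x = cl ∨ x = cr)
    (hredl : JoinReducible cl) (hredr : JoinReducible cr) :
    (cl ⊓ cr) ⋖ cl ∧ (cl ⊓ cr) ⋖ cr := by
  constructor
  · exact covby_aux cl cr hne hcl hcr
  · rw [inf_comm]
    exact covby_aux cr cl hne.symm hcr hcl
end

section
/- There is no algebra A such that the ordered set Princ(A) of principal congruences of A is order-isomorphic to the three-element 'V-shaped' poset {0, α, β} with least element 0 and two incomparable maximal elements α and β. -/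
set_option linter.unusedVariables false

/-- A general (finitary, one-sorted) algebra. -/
structure Alg : Type 1 where
  carrier : Type
  ι : Type
  arity : ι → ℕ
  ops : ∀ i : ι, (Fin (arity i) → carrier) → carrier

/-- A congruence of an algebra: an equivalence relation compatible with all operations. -/
def IsCong (A : Alg) (r : A.carrier → A.carrier → Prop) : Prop :=
  Equivalence r ∧ ∀ (i : A.ι) (x y : Fin (A.arity i) → A.carrier),
    (∀ j, r (x j) (y j)) → r (A.ops i x) (A.ops i y)

/-- The congruences of an algebra `A`. -/
def AlgCon (A : Alg) : Type := {r : A.carrier → A.carrier → Prop // IsCong A r}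

instance (A : Alg) : PartialOrder (AlgCon A) where
  le r s := ∀ a b, r.1 a b → s.1 a b
  le_refl r a b h := h
  le_trans r s t h1 h2 a b h := h2 a b (h1 a b h)
  le_antisymm r s h1 h2 := Subtype.ext (by
    funext a b
    exact propext ⟨h1 a b, h2 a b⟩)

instance (A : Alg) : InfSet (AlgCon A) where
  sInf S := ⟨fun a b => ∀ r ∈ S, r.1 a b,
    ⟨⟨fun a r _ => r.2.1.refl a,
      fun h r hr => r.2.1.symm (h r hr),
      fun h1 h2 r hr => r.2.1.trans (h1 r hr) (h2 r hr)⟩,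
     fun i x y h r hr => r.2.2 i x y (fun j => h j r hr)⟩⟩

instance (A : Alg) : CompleteLattice (AlgCon A) :=
  completeLatticeOfInf _ (fun S =>
    ⟨fun r hr a b h => h r hr, fun r hr a b h s hs => hr hs a b h⟩)

/-- The principal congruence generated by the pair `(a, b)`. -/
def algPrinc (A : Alg) (a b : A.carrier) : AlgCon A := sInf {r : AlgCon A | r.1 a b}

/-- The set of principal congruences of `A`. -/
def AlgPrinc (A : Alg) : Set (AlgCon A) := {θ | ∃ a b, θ = algPrinc A a b}

/-- The three-element "V-shaped" poset: a least element and two incomparable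
maximal elements. -/
inductive VPoset : Type
  | zero : VPoset
  | a : VPoset
  | b : VPoset

instance : PartialOrder VPoset where
  le x y := x = y ∨ x = VPoset.zero
  le_refl x := Or.inl rfl
  le_trans x y z h1 h2 := by
    rcases h1 with rfl | rfl
    · exact h2
    · exact Or.inr rfl
  le_antisymm x y h1 h2 := by
    rcases h1 with rfl | rfl
    · rfl
    · rcases h2 with rfl | rfl <;> rfl

lemma princ_rel (A : Alg) (a b : A.carrier) : (algPrinc A a b).1 a b :=
  fun _ hr => hr

lemma princ_le (A : Alg) {a b : A.carrier} {r : AlgCon A} (h : r.1 a b) :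
    algPrinc A a b ≤ r :=
  fun _ _ hxy => hxy r h

def eqCong (A : Alg) : AlgCon A :=
  ⟨Eq, ⟨⟨fun _ => rfl, Eq.symm, Eq.trans⟩,
    fun i x y h => congrArg (A.ops i) (funext h)⟩⟩

/-- No algebra has its ordered set of principal congruences isomorphic to the
V-shaped three-element poset. -/
theorem stmt_3 (A : Alg) : IsEmpty (↥(AlgPrinc A) ≃o VPoset) := by
  constructor
  intro f
  obtain ⟨a, b, hab⟩ := (f.symm VPoset.a).2
  obtain ⟨c, d, hcd⟩ := (f.symm VPoset.b).2
  obtain ⟨u, v, huv⟩ := (f.symm VPoset.zero).2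
  -- incomparability
  have hPQ : ¬ algPrinc A a b ≤ algPrinc A c d := by
    intro h
    rw [← hab, ← hcd] at h
    have h2 : VPoset.a ≤ VPoset.b := f.symm.le_iff_le.mp h
    rcases h2 with h2 | h2 <;> exact VPoset.noConfusion h2
  have hQP : ¬ algPrinc A c d ≤ algPrinc A a b := by
    intro h
    rw [← hab, ← hcd] at h
    have h2 : VPoset.b ≤ VPoset.a := f.symm.le_iff_le.mp h
    rcases h2 with h2 | h2 <;> exact VPoset.noConfusion h2
  -- every principal congruence is one of the three
  have tri : ∀ x y : A.carrier, algPrinc A x y = (f.symm VPoset.zero).1 ∨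
      algPrinc A x y = algPrinc A a b ∨ algPrinc A x y = algPrinc A c d := by
    intro x y
    set e : ↥(AlgPrinc A) := ⟨algPrinc A x y, ⟨x, y, rfl⟩⟩ with he
    have hback : (f.symm (f e)).1 = algPrinc A x y := by
      rw [f.symm_apply_apply]
    cases h : f e with
    | zero => left; rw [h] at hback; exact hback.symm
    | a => right; left; rw [h, hab] at hback; exact hback.symm
    | b => right; right; rw [h, hcd] at hback; exact hback.symm
  -- zero ≤ a, b
  have hZP : (f.symm VPoset.zero).1 ≤ algPrinc A a b := by
    rw [← hab]; exact f.symm.le_iff_le.mpr (Or.inr rfl)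
  have hZQ : (f.symm VPoset.zero).1 ≤ algPrinc A c d := by
    rw [← hcd]; exact f.symm.le_iff_le.mpr (Or.inr rfl)
  -- the bottom collapses nothing
  have hZuu : algPrinc A u u = (f.symm VPoset.zero).1 := by
    rcases tri u u with h | h | h
    · exact h
    · exfalso
      have hle : algPrinc A a b ≤ (f.symm VPoset.zero).1 := by
        rw [← h]; exact princ_le A ((f.symm VPoset.zero).1.2.1.refl u)
      exact hPQ (le_trans hle hZQ)
    · exfalso
      have hle : algPrinc A c d ≤ (f.symm VPoset.zero).1 := by
        rw [← h]; exact princ_le A ((f.symm VPoset.zero).1.2.1.refl u)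
      exact hQP (le_trans hle hZP)
  have hZeq : ∀ x y, (f.symm VPoset.zero).1.1 x y → x = y := by
    have hle : (f.symm VPoset.zero).1 ≤ eqCong A := by
      rw [← hZuu]; exact princ_le A rfl
    exact fun x y h => hle x y h
  -- abbreviations
  set P := algPrinc A a b with hPdef
  set Q := algPrinc A c d with hQdef
  have Psymm : ∀ {x y}, P.1 x y → P.1 y x := fun h => P.2.1.symm h
  have Ptrans : ∀ {x y z}, P.1 x y → P.1 y z → P.1 x z := fun h1 h2 => P.2.1.trans h1 h2
  have Qsymm : ∀ {x y}, Q.1 x y → Q.1 y x := fun h => Q.2.1.symm h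
  have Qtrans : ∀ {x y z}, Q.1 x y → Q.1 y z → Q.1 x z := fun h1 h2 => Q.2.1.trans h1 h2
  have relP : P.1 a b := princ_rel A a b
  have relQ : Q.1 c d := princ_rel A c d
  have relof : ∀ {x y} {θ : AlgCon A}, algPrinc A x y = θ → θ.1 x y := by
    intro x y θ h; rw [← h]; exact princ_rel A x y
  have eqof : ∀ {x y}, algPrinc A x y = (f.symm VPoset.zero).1 → x = y := by
    intro x y h; exact hZeq x y (relof h)
  rcases tri a c with h1 | h1 | h1
  · -- a = c
    have hac : a = c := eqof h1
    subst hac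
    rcases tri b d with h2 | h2 | h2
    · have hbd : b = d := eqof h2
      subst hbd
      exact hPQ le_rfl
    · -- con b d = P
      have h3 : P.1 b d := relof h2
      exact hQP (princ_le A (Ptrans relP h3))
    · -- con b d = Q
      have h3 : Q.1 b d := relof h2
      exact hPQ (princ_le A (Qtrans relQ (Qsymm h3)))
  · -- con a c = P
    have hPac : P.1 a c := relof h1
    rcases tri a d with h2 | h2 | h2
    · have had : a = d := eqof h2
      subst had
      exact hQP (princ_le A (Psymm hPac))
    · have hPad : P.1 a d := relof h2
      exact hQP (princ_le A (Ptrans (Psymm hPac) hPad))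
    · have hQad : Q.1 a d := relof h2
      rcases tri b d with h3 | h3 | h3
      · have hbd : b = d := eqof h3
        subst hbd
        exact hPQ (princ_le A hQad)
      · have hPbd : P.1 b d := relof h3
        -- con a d ≤ P, but con a d = Q
        have : Q ≤ P := by rw [← h2]; exact princ_le A (Ptrans relP hPbd)
        exact hQP this
      · have hQbd : Q.1 b d := relof h3
        exact hPQ (princ_le A (Qtrans hQad (Qsymm hQbd)))
  · -- con a c = Q
    have hQac : Q.1 a c := relof h1
    rcases tri b c with h2 | h2 | h2
    · have hbc : b = c := eqof h2
      subst hbc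
      exact hPQ (princ_le A hQac)
    · have hPbc : P.1 b c := relof h2
      rcases tri b d with h3 | h3 | h3
      · have hbd : b = d := eqof h3
        subst hbd
        exact hQP (princ_le A (Psymm hPbc))
      · have hPbd : P.1 b d := relof h3
        exact hQP (princ_le A (Ptrans (Psymm hPbc) hPbd))
      · have hQbd : Q.1 b d := relof h3
        rcases tri a d with h4 | h4 | h4
        · have had : a = d := eqof h4
          subst had
          exact hPQ (princ_le A (Qsymm hQbd))
        · have hPad : P.1 a d := relof h4
          have hPcd : P.1 c d := Ptrans (Psymm hPbc) (Ptrans (Psymm relP) hPad)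
          exact hQP (princ_le A hPcd)
        · have hQad : Q.1 a d := relof h4
          exact hPQ (princ_le A (Qtrans hQad (Qsymm hQbd)))
    · have hQbc : Q.1 b c := relof h2
      exact hPQ (princ_le A (Qtrans hQac (Qsymm hQbc)))
end

section
/- Let A be an algebra with finite congruence lattice D = Con(A), and suppose D has exactly two coatoms α and β and the top congruence 1 is not a principal congruence of A. Then 1 = α ∪ β as relations on A. -/
set_option linter.unusedVariables false

/-- If the finite congruence lattice of an algebra `A` has exactly two coatoms `α`
and `β` and the top congruence is not principal, then the top congruence is the
set-theoretic union `α ∪ β`. -/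
theorem stmt_6 (A : Alg) [Finite (AlgCon A)] (α β : AlgCon A) (hne : α ≠ β)
    (hα : IsCoatom α) (hβ : IsCoatom β)
    (honly : ∀ γ : AlgCon A, IsCoatom γ → γ = α ∨ γ = β)
    (htop : (⊤ : AlgCon A) ∉ AlgPrinc A) :
    ∀ a b : A.carrier, (⊤ : AlgCon A).1 a b ↔ (α.1 a b ∨ β.1 a b) := by
  intro a b
  have hprinc : (algPrinc A a b).1 a b := fun r hr => hr
  constructor
  · intro _
    have hne' : algPrinc A a b ≠ ⊤ := fun h => htop ⟨a, b, h.symm⟩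
    rcases (eq_top_or_exists_le_coatom (algPrinc A a b)).resolve_left hne' with ⟨γ, hγ, hle⟩
    rcases honly γ hγ with rfl | rfl
    · exact Or.inl (hle a b hprinc)
    · exact Or.inr (hle a b hprinc)
  · intro _
    exact (le_top : algPrinc A a b ≤ ⊤) a b hprinc
end

section
/- Let D be a finite distributive lattice containing a three-element antichain {p_0, p_1, p_2} of join-irreducible elements, let p = p_0 ∨ p_1 ∨ p_2, and let Q = J(D) ∪ {0, 1, p}. Then the inclusion Q ⊆ D is not chain-representable: there is no finite chain C with surjective coloring σ: Prime(C) → J(D) such that {rep(I) : I an interval of C} = Q, where rep(I) = ⋁_{p∈Prime(I)} σ(p). -/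
open scoped Classical

/-- The prime intervals (covering pairs) of an ordered set `C`. -/
abbrev PrimeInt (C : Type) [Preorder C] : Type := {e : C × C // e.1 ⋖ e.2}

/-- The element of `D` represented by the interval `[a, b]` of the colored chain:
the join of the colors of all prime intervals lying inside `[a, b]`. -/
noncomputable def chainRep {C D : Type} [LinearOrder C] [Fintype C]
    [Lattice D] [OrderBot D] (σ : PrimeInt C → D) (a b : C) : D :=
  (Finset.univ.filter (fun e : PrimeInt C => a ≤ e.1.1 ∧ e.1.2 ≤ b)).sup σ

/-- The subset of `D` represented by the colored chain `(C, σ)`. -/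
noncomputable def repSet {C D : Type} [LinearOrder C] [Fintype C]
    [Lattice D] [OrderBot D] (σ : PrimeInt C → D) : Set D :=
  {x : D | ∃ a b : C, a ≤ b ∧ x = chainRep σ a b}

lemma chainRep_mono {C D : Type} [LinearOrder C] [Fintype C]
    [Lattice D] [OrderBot D] (σ : PrimeInt C → D) (a : C) {b b' : C} (h : b ≤ b') :
    chainRep σ a b ≤ chainRep σ a b' := by
  apply Finset.sup_mono
  intro e he
  simp only [Finset.mem_filter, Finset.mem_univ, true_and] at he ⊢
  exact ⟨he.1, he.2.trans h⟩

lemma chainRep_self {C D : Type} [LinearOrder C] [Fintype C]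
    [Lattice D] [OrderBot D] (σ : PrimeInt C → D) (a : C) :
    chainRep σ a a = ⊥ := by
  rw [chainRep]
  convert Finset.sup_empty
  rw [Finset.eq_empty_iff_forall_notMem]
  intro e he
  simp only [Finset.mem_filter, Finset.mem_univ, true_and] at he
  exact absurd (he.2.trans he.1) e.2.1.not_ge

/-- If a finite distributive lattice `D` contains a three-element antichain of
join-irreducible elements `p₀, p₁, p₂`, then the inclusion
`J(D) ∪ {⊥, ⊤, p₀ ⊔ p₁ ⊔ p₂} ⊆ D` is not chain-representable. -/
theorem stmt_11 {D : Type} [DistribLattice D] [Fintype D] [BoundedOrder D]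
    (p₀ p₁ p₂ : D) (h0 : SupIrred p₀) (h1 : SupIrred p₁) (h2 : SupIrred p₂)
    (ha01 : ¬ p₀ ≤ p₁) (ha10 : ¬ p₁ ≤ p₀) (ha02 : ¬ p₀ ≤ p₂) (ha20 : ¬ p₂ ≤ p₀)
    (ha12 : ¬ p₁ ≤ p₂) (ha21 : ¬ p₂ ≤ p₁)
    (C : Type) [LinearOrder C] [Fintype C] [Nonempty C]
    (σ : PrimeInt C → D) (hJ : ∀ e : PrimeInt C, SupIrred (σ e))
    (hsurj : ∀ x : D, SupIrred x → ∃ e : PrimeInt C, σ e = x) :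
    repSet σ ≠ {x : D | SupIrred x} ∪ {⊥, ⊤, p₀ ⊔ p₁ ⊔ p₂} := by
  intro heq
  set p : D := p₀ ⊔ p₁ ⊔ p₂ with hp
  -- basic facts about the antichain
  have hp0 : p₀ ≤ p := le_sup_of_le_left le_sup_left
  have hp1 : p₁ ≤ p := le_sup_of_le_left le_sup_right
  have hp2 : p₂ ≤ p := le_sup_right
  have key : ∀ x y : D, (x = p₀ ∨ x = p₁ ∨ x = p₂) → (y = p₀ ∨ y = p₁ ∨ y = p₂) →
      ¬ p ≤ x ⊔ y := by
    rintro x y (rfl | rfl | rfl) (rfl | rfl | rfl) h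
    · exact ha10 (hp1.trans (h.trans (by simp)))
    · rcases h2.supPrime.2 (hp2.trans h) with h' | h'
      exacts [ha20 h', ha21 h']
    · rcases h1.supPrime.2 (hp1.trans h) with h' | h'
      exacts [ha10 h', ha12 h']
    · rcases h2.supPrime.2 (hp2.trans h) with h' | h'
      exacts [ha21 h', ha20 h']
    · exact ha01 (hp0.trans (h.trans (by simp)))
    · rcases h0.supPrime.2 (hp0.trans h) with h' | h'
      exacts [ha01 h', ha02 h']
    · rcases h1.supPrime.2 (hp1.trans h) with h' | h'
      exacts [ha12 h', ha10 h']
    · rcases h0.supPrime.2 (hp0.trans h) with h' | h'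
      exacts [ha02 h', ha01 h']
    · exact ha12 (hp1.trans (h.trans (by simp)))
  have hpne_bot : p ≠ ⊥ := by
    intro h
    exact h0.supPrime.ne_bot (le_antisymm (h ▸ hp0) bot_le)
  -- classification of elements of Q below p
  have classify : ∀ x : D, x ∈ repSet σ → x ≤ p →
      x = ⊥ ∨ x = p ∨ (x ≤ p₀ ∨ x ≤ p₁ ∨ x ≤ p₂) := by
    intro x hx hxp
    rw [heq] at hx
    rcases hx with hx | hx
    · right; right
      rcases (hx.supPrime.2 hxp : x ≤ p₀ ⊔ p₁ ∨ x ≤ p₂) with h | h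
      · rcases hx.supPrime.2 h with h' | h'
        exacts [Or.inl h', Or.inr (Or.inl h')]
      · exact Or.inr (Or.inr h)
    · rcases hx with rfl | rfl | rfl
      · exact Or.inl rfl
      · right; left; exact le_antisymm hxp le_top
      · right; left; rfl
  -- p is represented by some interval
  have hpmem : p ∈ repSet σ := by
    rw [heq]; right; right; right; rfl
  obtain ⟨a, b, hab, hrep⟩ := hpmem
  -- take the minimal right endpoint c with chainRep σ a c = p
  set S : Finset C := Finset.univ.filter
    (fun c => a ≤ c ∧ c ≤ b ∧ chainRep σ a c = p) with hS
  have hbS : b ∈ S := by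
    simp only [hS, Finset.mem_filter, Finset.mem_univ, true_and]
    exact ⟨hab, le_rfl, hrep.symm⟩
  have hSne : S.Nonempty := ⟨b, hbS⟩
  set c : C := S.min' hSne with hc
  have hcS : c ∈ S := S.min'_mem hSne
  simp only [hS, Finset.mem_filter, Finset.mem_univ, true_and] at hcS
  obtain ⟨hac, hcb, hcrep⟩ := hcS
  have hane : a ≠ c := by
    intro h
    exact hpne_bot (by rw [← hcrep, ← h, chainRep_self])
  have haltc : a < c := lt_of_le_of_ne hac hane
  -- the predecessor c' of c
  set T : Finset C := Finset.univ.filter (fun x => x < c) with hT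
  have haT : a ∈ T := by simp [hT, haltc]
  have hTne : T.Nonempty := ⟨a, haT⟩
  set c' : C := T.max' hTne with hc'
  have hc'T : c' ∈ T := T.max'_mem hTne
  simp only [hT, Finset.mem_filter, Finset.mem_univ, true_and] at hc'T
  have hac' : a ≤ c' := T.le_max' a haT
  have hcov : c' ⋖ c := by
    refine ⟨hc'T, fun x hx hxc => ?_⟩
    have : x ∈ T := by simp [hT, hxc]
    exact absurd (T.le_max' x this) (not_le.2 hx)
  set e : PrimeInt C := ⟨(c', c), hcov⟩ with he
  -- decomposition: chainRep σ a c = chainRep σ a c' ⊔ σ e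
  have hdec : chainRep σ a c = chainRep σ a c' ⊔ σ e := by
    apply le_antisymm
    · apply Finset.sup_le
      intro f hf
      simp only [Finset.mem_filter, Finset.mem_univ, true_and] at hf
      by_cases h : f.1.2 ≤ c'
      · exact le_sup_of_le_left (Finset.le_sup (by
          simp only [Finset.mem_filter, Finset.mem_univ, true_and]
          exact ⟨hf.1, h⟩))
      · push_neg at h
        have hfc : f.1.2 = c := by
          rcases lt_or_eq_of_le hf.2 with h' | h'
          · exact absurd h' (hcov.2 h)
          · exact h'
        have hfc' : f.1.1 = c' := by
          have h1 : f.1.1 ⋖ c := hfc ▸ f.2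
          apply le_antisymm
          · by_contra hlt
            exact (hcov.2 (not_le.1 hlt)) h1.1
          · by_contra hlt
            exact (h1.2 (not_le.1 hlt)) hcov.1
        have : f = e := Subtype.ext (Prod.ext hfc' hfc)
        rw [this]
        exact le_sup_right
    · apply sup_le
      · exact chainRep_mono σ a hcov.1.le
      · apply Finset.le_sup
        simp only [Finset.mem_filter, Finset.mem_univ, true_and]
        exact ⟨hac', le_rfl⟩
  -- classify X = chainRep σ a c'
  set X : D := chainRep σ a c' with hX
  have hXle : X ≤ p := hcrep ▸ chainRep_mono σ a hcov.1.le
  have hXne : X ≠ p := by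
    intro h
    have : c' ∈ S := by
      simp only [hS, Finset.mem_filter, Finset.mem_univ, true_and]
      exact ⟨hac', hcov.1.le.trans hcb, h⟩
    exact absurd (S.min'_le c' this) (not_le.2 hcov.1)
  have hXmem : X ∈ repSet σ := ⟨a, c', hac', rfl⟩
  -- classify σ e
  have hs_le : σ e ≤ p := by
    rw [← hcrep, hdec]; exact le_sup_right
  have hs : σ e ≤ p₀ ∨ σ e ≤ p₁ ∨ σ e ≤ p₂ := by
    rcases ((hJ e).supPrime.2 hs_le : σ e ≤ p₀ ⊔ p₁ ∨ σ e ≤ p₂) with h | h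
    · rcases (hJ e).supPrime.2 h with h' | h'
      exacts [Or.inl h', Or.inr (Or.inl h')]
    · exact Or.inr (Or.inr h)
  have hpXs : p ≤ X ⊔ σ e := by rw [← hdec, hcrep]
  -- final contradiction
  have hsmem : ∃ y, (y = p₀ ∨ y = p₁ ∨ y = p₂) ∧ σ e ≤ y := by
    rcases hs with h | h | h
    exacts [⟨p₀, Or.inl rfl, h⟩, ⟨p₁, Or.inr (Or.inl rfl), h⟩,
      ⟨p₂, Or.inr (Or.inr rfl), h⟩]
  obtain ⟨y, hy, hsy⟩ := hsmem
  rcases classify X hXmem hXle with hXbot | h | hX3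
  · exact key y y hy hy ((hXbot ▸ hpXs).trans ((sup_le bot_le hsy).trans le_sup_left))
  · exact hXne h
  · have hxmem : ∃ x, (x = p₀ ∨ x = p₁ ∨ x = p₂) ∧ X ≤ x := by
      rcases hX3 with h | h | h
      exacts [⟨p₀, Or.inl rfl, h⟩, ⟨p₁, Or.inr (Or.inl rfl), h⟩,
        ⟨p₂, Or.inr (Or.inr rfl), h⟩]
    obtain ⟨x, hx, hXx⟩ := hxmem
    exact key x y hx hy (hpXs.trans (sup_le_sup hXx hsy))
end

section
/- Let C be a finite chain, D a finite distributive lattice, σ: Prime(C) → J(D) a surjective coloring, and let 𝔄 be the unary algebra on the underlying set of C whose operations are all contraction maps g_{uv} for u < v in C and all forcing maps f_{p,h} for distinct prime intervals p ≠ h of C with σ(p) ≥ σ(h). Then the map φ: D → Con(𝔄) defined by φ(x) = {(u,v) : σ(q) ≤ x for every prime interval q of the interval [u∧v, u∨v]} is a lattice isomorphism from D onto the congruence lattice of 𝔄. -/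
set_option linter.unusedVariables false

open scoped Classical

/-- The contraction map of the interval `[u, v]` of a chain. -/
def contraction {C : Type} [LinearOrder C] (u v : C) (x : C) : C :=
  if v ≤ x then v else if u ≤ x then x else u

/-- The forcing map `f_{p,h}` associated with two distinct prime intervals `p`, `h`
of a chain: elements of the interior set between `p` and `h` are sent to the
endpoint of `h` adjacent to the interior set, all other elements to the other
endpoint of `h`. -/
def forcing {C : Type} [LinearOrder C] (p h : PrimeInt C) (x : C) : C :=
  if p.1.2 ≤ h.1.1 then (if p.1.2 ≤ x ∧ x ≤ h.1.1 then h.1.1 else h.1.2)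
  else (if h.1.2 ≤ x ∧ x ≤ p.1.1 then h.1.2 else h.1.1)

/-- The unary "forcing algebra" on the chain `C`, whose operations are all
contractions `g_{uv}` for `u < v` and all forcing maps `f_{p,h}` for distinct
prime intervals with `σ(p) ≥ σ(h)`. -/
def forcingAlg (C : Type) [LinearOrder C] {D : Type} [Lattice D]
    (σ : PrimeInt C → D) : Alg where
  carrier := C
  ι := {uv : C × C // uv.1 < uv.2} ⊕
    {ph : PrimeInt C × PrimeInt C // ph.1 ≠ ph.2 ∧ σ ph.2 ≤ σ ph.1}
  arity _ := 1
  ops i x :=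
    match i with
    | Sum.inl uv => contraction uv.1.1 uv.1.2 (x 0)
    | Sum.inr ph => forcing ph.1.1 ph.1.2 (x 0)

section ChainHelpers

variable {C : Type} [LinearOrder C]

lemma prime_eq_of_between {p q : PrimeInt C} (h1 : p.1.1 ≤ q.1.1) (h2 : q.1.2 ≤ p.1.2) :
    q = p := by
  have e1 : q.1.1 = p.1.1 := le_antisymm (p.2.le_of_lt (lt_of_lt_of_le q.2.1 h2)) h1
  have e2 : q.1.2 = p.1.2 := le_antisymm h2 (p.2.ge_of_gt (e1 ▸ q.2.1))
  exact Subtype.ext (Prod.ext e1 e2)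

lemma prime_sep {p q : PrimeInt C} (h : p ≠ q) : p.1.2 ≤ q.1.1 ∨ q.1.2 ≤ p.1.1 := by
  by_contra hc
  push_neg at hc
  obtain ⟨h1, h2⟩ := hc
  exact h ((prime_eq_of_between (q.2.le_of_lt h2) (q.2.ge_of_gt h1)).symm)

lemma contraction_eq_left {u v m : C} (h1 : m ≤ u) (huv : u < v) : contraction u v m = u := by
  unfold contraction
  split_ifs with hb ha
  · exact absurd (hb.trans h1) (not_le.2 huv)
  · exact le_antisymm h1 ha
  · rfl

lemma contraction_eq_right {u v M : C} (h2 : v ≤ M) : contraction u v M = v := by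
  unfold contraction; rw [if_pos h2]

lemma contraction_of_lt_left {u v t : C} (huv : u ≤ v) (h : t < u) : contraction u v t = u := by
  unfold contraction
  rw [if_neg (not_le.2 (h.trans_le huv)), if_neg (not_le.2 h)]

lemma contraction_of_ge_right {u v t : C} (h : v ≤ t) : contraction u v t = v := by
  unfold contraction; rw [if_pos h]

lemma le_contraction_self {u v m : C} (hmv : m ≤ v) : m ≤ contraction u v m := by
  unfold contraction
  split_ifs <;> first | assumption | exact le_rfl | exact le_of_not_ge (by assumption)

lemma contraction_self_le {u v M : C} (huM : u ≤ M) : contraction u v M ≤ M := by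
  unfold contraction
  split_ifs <;> first | assumption | exact le_rfl | exact le_of_not_le (by assumption)

lemma contraction_eq_sup_inf {u v : C} (huv : u ≤ v) (x : C) :
    contraction u v x = x ⊓ v ⊔ u := by
  unfold contraction
  split_ifs with h1 h2
  · rw [inf_eq_right.2 h1, sup_eq_left.2 huv]
  · rw [inf_eq_left.2 (not_le.1 h1).le, sup_eq_left.2 h2]
  · rw [inf_eq_left.2 ((not_le.1 h2).le.trans huv), sup_eq_right.2 (not_le.1 h2).le]

lemma contraction_mono {u v : C} (huv : u ≤ v) : Monotone (contraction u v) := by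
  intro a b hab
  rw [contraction_eq_sup_inf huv, contraction_eq_sup_inf huv]
  exact sup_le_sup_right (inf_le_inf_right _ hab) _

lemma forcing_mem {p h : PrimeInt C} (t : C) :
    forcing p h t = h.1.1 ∨ forcing p h t = h.1.2 := by
  unfold forcing
  split_ifs <;> simp

end ChainHelpers

section Rrel

variable {C : Type} [LinearOrder C] {D : Type} [Lattice D]

/-- The relation underlying `φ x`. -/
def Rrel (σ : PrimeInt C → D) (x : D) (u v : C) : Prop :=
  ∀ q : PrimeInt C, u ⊓ v ≤ q.1.1 → q.1.2 ≤ u ⊔ v → σ q ≤ x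

variable {σ : PrimeInt C → D} {x : D}

lemma Rrel_refl (σ : PrimeInt C → D) (x : D) (u : C) : Rrel σ x u u := by
  intro q h1 h2
  rw [inf_idem] at h1
  rw [sup_idem] at h2
  exact absurd ((h1.trans_lt q.2.1).trans_le h2) (lt_irrefl u)

lemma Rrel_symm {u v : C} (h : Rrel σ x u v) : Rrel σ x v u := by
  intro q h1 h2
  exact h q (by rwa [inf_comm]) (by rwa [sup_comm])

lemma Rrel_trans {a b c : C} (hab : Rrel σ x a b) (hbc : Rrel σ x b c) : Rrel σ x a c := by
  intro q h1 h2
  rcases le_or_gt b q.1.1 with hb | hb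
  · rcases le_total a c with hac | hac
    · exact hbc q (inf_le_left.trans hb)
        (h2.trans ((sup_eq_right.2 hac).le.trans le_sup_right))
    · exact hab q (inf_le_right.trans hb)
        (h2.trans ((sup_eq_left.2 hac).le.trans le_sup_left))
  · have hq1b : q.1.2 ≤ b := q.2.ge_of_gt hb
    rcases le_total a c with hac | hac
    · refine hab q (inf_le_left.trans ?_) (hq1b.trans le_sup_right)
      rw [← inf_eq_left.2 hac]; exact h1
    · refine hbc q (inf_le_right.trans ?_) (hq1b.trans le_sup_left)
      rw [← inf_eq_right.2 hac]; exact h1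

lemma Rrel_equivalence (σ : PrimeInt C → D) (x : D) : Equivalence (Rrel σ x) :=
  ⟨Rrel_refl σ x, Rrel_symm, Rrel_trans⟩

lemma Rrel_contraction {u v : C} (huv : u ≤ v) {a b : C} (hab : Rrel σ x a b) :
    Rrel σ x (contraction u v a) (contraction u v b) := by
  intro q h1 h2
  have hmono := contraction_mono (C := C) huv
  rw [← hmono.map_min] at h1
  rw [← hmono.map_max] at h2
  set m := a ⊓ b with hm
  set M := a ⊔ b with hM
  have hlt : contraction u v m < contraction u v M := (h1.trans_lt q.2.1).trans_le h2
  by_cases hMu : M < u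
  · rw [contraction_of_lt_left huv hMu, contraction_of_lt_left huv ((inf_le_sup.trans_lt hMu))]
      at hlt
    exact absurd hlt (lt_irrefl u)
  · by_cases hvm : v < m
    · rw [contraction_of_ge_right hvm.le, contraction_of_ge_right (hvm.le.trans inf_le_sup)]
        at hlt
      exact absurd hlt (lt_irrefl v)
    · exact hab q ((le_contraction_self (not_lt.1 hvm)).trans h1)
        (h2.trans (contraction_self_le (not_lt.1 hMu)))

lemma Rrel_forcing_auxA {p h : PrimeInt C} (hσ : σ h ≤ σ p) {a b : C} (hab : Rrel σ x a b)
    (hPa : p.1.2 ≤ a ∧ a ≤ h.1.1) (hPb : ¬(p.1.2 ≤ b ∧ b ≤ h.1.1)) : σ h ≤ x := by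
  rcases le_or_gt p.1.2 b with hb | hb
  · have hbh : h.1.1 < b := lt_of_not_ge fun hle => hPb ⟨hb, hle⟩
    exact hab h (inf_le_left.trans hPa.2) ((h.2.ge_of_gt hbh).trans le_sup_right)
  · exact hσ.trans (hab p (inf_le_right.trans (p.2.le_of_lt hb)) (hPa.1.trans le_sup_left))

lemma Rrel_forcing_auxB {p h : PrimeInt C} (hσ : σ h ≤ σ p) {a b : C} (hab : Rrel σ x a b)
    (hPa : h.1.2 ≤ a ∧ a ≤ p.1.1) (hPb : ¬(h.1.2 ≤ b ∧ b ≤ p.1.1)) : σ h ≤ x := by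
  rcases le_or_gt h.1.2 b with hb | hb
  · have hbp : p.1.1 < b := lt_of_not_ge fun hle => hPb ⟨hb, hle⟩
    exact hσ.trans (hab p (inf_le_left.trans hPa.2) ((p.2.ge_of_gt hbp).trans le_sup_right))
  · exact hab h (inf_le_right.trans (h.2.le_of_lt hb)) (hPa.1.trans le_sup_left)

lemma Rrel_forcing {p h : PrimeInt C} (hne : p ≠ h) (hσ : σ h ≤ σ p) {a b : C}
    (hab : Rrel σ x a b) : Rrel σ x (forcing p h a) (forcing p h b) := by
  by_cases hfe : forcing p h a = forcing p h b
  · rw [hfe]; exact Rrel_refl σ x _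
  · have hhx : σ h ≤ x := by
      rcases prime_sep hne with hc | hc
      · rw [forcing, forcing, if_pos hc, if_pos hc] at hfe
        by_cases hPa : p.1.2 ≤ a ∧ a ≤ h.1.1 <;> by_cases hPb : p.1.2 ≤ b ∧ b ≤ h.1.1
        · exact absurd (by rw [if_pos hPa, if_pos hPb]) hfe
        · exact Rrel_forcing_auxA hσ hab hPa hPb
        · exact Rrel_forcing_auxA hσ (Rrel_symm hab) hPb hPa
        · exact absurd (by rw [if_neg hPa, if_neg hPb]) hfe
      · have hnc : ¬ p.1.2 ≤ h.1.1 := fun hcc =>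
          lt_irrefl _ ((p.2.1.trans_le hcc).trans (h.2.1.trans_le hc))
        rw [forcing, forcing, if_neg hnc, if_neg hnc] at hfe
        by_cases hPa : h.1.2 ≤ a ∧ a ≤ p.1.1 <;> by_cases hPb : h.1.2 ≤ b ∧ b ≤ p.1.1
        · exact absurd (by rw [if_pos hPa, if_pos hPb]) hfe
        · exact Rrel_forcing_auxB hσ hab hPa hPb
        · exact Rrel_forcing_auxB hσ (Rrel_symm hab) hPb hPa
        · exact absurd (by rw [if_neg hPa, if_neg hPb]) hfe
    intro q h1 h2
    have hq : q = h := by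
      rcases forcing_mem (p := p) (h := h) a with ea | ea <;>
        rcases forcing_mem (p := p) (h := h) b with eb | eb
      · exact absurd (ea.trans eb.symm) hfe
      · rw [ea, eb, inf_eq_left.2 h.2.1.le] at h1
        rw [ea, eb, sup_eq_right.2 h.2.1.le] at h2
        exact prime_eq_of_between h1 h2
      · rw [ea, eb, inf_eq_right.2 h.2.1.le] at h1
        rw [ea, eb, sup_eq_left.2 h.2.1.le] at h2
        exact prime_eq_of_between h1 h2
      · exact absurd (ea.trans eb.symm) hfe
    rw [hq]; exact hhx

lemma Rrel_prime_iff (q : PrimeInt C) : Rrel σ x q.1.1 q.1.2 ↔ σ q ≤ x := by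
  constructor
  · intro H
    exact H q (inf_eq_left.2 q.2.1.le).le (sup_eq_right.2 q.2.1.le).ge
  · intro hx q' h1 h2
    rw [inf_eq_left.2 q.2.1.le] at h1
    rw [sup_eq_right.2 q.2.1.le] at h2
    rw [prime_eq_of_between h1 h2]
    exact hx

lemma Rrel_isCong (σ : PrimeInt C → D) (x : D) : IsCong (forcingAlg C σ) (@Rrel C _ D _ σ x) := by
  refine ⟨Rrel_equivalence σ x, ?_⟩
  rintro (uv | ph) a b hj
  · exact Rrel_contraction uv.2.le (hj ⟨0, Nat.zero_lt_one⟩)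
  · exact Rrel_forcing ph.2.1 ph.2.2 (hj ⟨0, Nat.zero_lt_one⟩)

end Rrel

section Cong

variable {C : Type} [LinearOrder C] {D : Type} [Lattice D] {σ : PrimeInt C → D}

/-- If `r` is reflexive and transitive and collapses every prime interval of `[u, v]`,
then it relates `u` and `v`. -/
lemma rel_of_primes [Fintype C] {r : C → C → Prop}
    (hrefl : ∀ a, r a a) (htrans : ∀ {a b c : C}, r a b → r b c → r a c) :
    ∀ (n : ℕ) (u v : C), (Finset.univ.filter fun t => u < t ∧ t ≤ v).card ≤ n → u ≤ v →
      (∀ q : PrimeInt C, u ≤ q.1.1 → q.1.2 ≤ v → r q.1.1 q.1.2) → r u v := by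
  intro n
  induction n with
  | zero =>
    intro u v hcard huv H
    rcases eq_or_lt_of_le huv with rfl | hlt
    · exact hrefl u
    · have hv : v ∈ Finset.univ.filter (fun t => u < t ∧ t ≤ v) :=
        Finset.mem_filter.2 ⟨Finset.mem_univ _, hlt, le_rfl⟩
      exact absurd (Finset.card_pos.2 ⟨v, hv⟩) (by omega)
  | succ n ih =>
    intro u v hcard huv H
    rcases eq_or_lt_of_le huv with rfl | hlt
    · exact hrefl u
    have hne : (Finset.univ.filter fun t => u < t ∧ t ≤ v).Nonempty :=
      ⟨v, Finset.mem_filter.2 ⟨Finset.mem_univ _, hlt, le_rfl⟩⟩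
    set c := (Finset.univ.filter fun t => u < t ∧ t ≤ v).min' hne with hcdef
    have hcmem : c ∈ Finset.univ.filter fun t => u < t ∧ t ≤ v := Finset.min'_mem _ hne
    obtain ⟨-, huc, hcv⟩ := Finset.mem_filter.1 hcmem
    have hcov : u ⋖ c := by
      refine ⟨huc, fun d hud hdc => ?_⟩
      exact absurd
        (Finset.min'_le _ d (Finset.mem_filter.2 ⟨Finset.mem_univ _, hud, hdc.le.trans hcv⟩))
        (not_le.2 hdc)
    have h1 : r u c := H ⟨(u, c), hcov⟩ le_rfl hcv
    have hsub : (Finset.univ.filter fun t => c < t ∧ t ≤ v) ⊂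
        (Finset.univ.filter fun t => u < t ∧ t ≤ v) := by
      refine (Finset.ssubset_iff_of_subset fun t ht => ?_).2
        ⟨c, hcmem, by simp [lt_irrefl]⟩
      obtain ⟨-, h1', h2'⟩ := Finset.mem_filter.1 ht
      exact Finset.mem_filter.2 ⟨Finset.mem_univ _, huc.trans h1', h2'⟩
    have hcard' : (Finset.univ.filter fun t => c < t ∧ t ≤ v).card ≤ n := by
      have := Finset.card_lt_card hsub
      omega
    exact htrans h1 (ih c v hcard' hcv fun q hq1 hq2 => H q (huc.le.trans hq1) hq2)

/-- A congruence that collapses `m` and `M` collapses every prime interval of `[m, M]`. -/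
lemma cong_prime_collapse (θ : AlgCon (forcingAlg C σ)) {m M : C} (hmM : θ.1 m M)
    (q : PrimeInt C) (h1 : m ≤ q.1.1) (h2 : q.1.2 ≤ M) : θ.1 q.1.1 q.1.2 := by
  obtain ⟨r, hr⟩ : ∃ r : C → C → Prop, ∀ a b : C, r a b ↔ θ.1 a b := ⟨θ.1, fun _ _ => Iff.rfl⟩
  have hcontr : ∀ (u v : C), u < v → ∀ a b : C, r a b →
      r (contraction u v a) (contraction u v b) := fun u v huv a b hab =>
    (hr _ _).2 (θ.2.2 (Sum.inl ⟨(u, v), huv⟩) (fun _ => a) (fun _ => b)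
      (fun _ => (hr a b).1 hab))
  have key : r (contraction q.1.1 q.1.2 m) (contraction q.1.1 q.1.2 M) :=
    hcontr q.1.1 q.1.2 q.2.1 m M ((hr m M).2 hmM)
  rw [contraction_eq_left h1 q.2.1, contraction_eq_right h2] at key
  exact (hr _ _).1 key

/-- A congruence that collapses a prime interval `p` collapses any other prime
interval `q` with `σ q ≤ σ p`. -/
lemma cong_forcing_collapse (θ : AlgCon (forcingAlg C σ)) {p q : PrimeInt C}
    (hpθ : θ.1 p.1.1 p.1.2) (hpq : p ≠ q) (hle : σ q ≤ σ p) : θ.1 q.1.1 q.1.2 := by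
  obtain ⟨r, hr⟩ : ∃ r : C → C → Prop, ∀ a b : C, r a b ↔ θ.1 a b := ⟨θ.1, fun _ _ => Iff.rfl⟩
  have hforce : ∀ a b : C, r a b → r (forcing p q a) (forcing p q b) := fun a b hab =>
    (hr _ _).2 (θ.2.2 (Sum.inr ⟨(p, q), hpq, hle⟩) (fun _ => a) (fun _ => b)
      (fun _ => (hr a b).1 hab))
  have key : r (forcing p q p.1.1) (forcing p q p.1.2) :=
    hforce p.1.1 p.1.2 ((hr _ _).2 hpθ)
  refine (hr _ _).1 ((hr _ _).2 (θ.2.1.symm ((hr _ _).1 ?_)))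
  rcases prime_sep hpq with hc | hc
  · have e1 : forcing p q p.1.1 = q.1.2 := by
      rw [forcing, if_pos hc, if_neg]
      rintro ⟨hh, -⟩
      exact absurd hh (not_le.2 p.2.1)
    have e2 : forcing p q p.1.2 = q.1.1 := by
      rw [forcing, if_pos hc, if_pos ⟨le_rfl, hc⟩]
    rwa [e1, e2] at key
  · have hnc : ¬ p.1.2 ≤ q.1.1 := fun hcc =>
      lt_irrefl _ ((p.2.1.trans_le hcc).trans (q.2.1.trans_le hc))
    have e1 : forcing p q p.1.1 = q.1.2 := by
      rw [forcing, if_neg hnc, if_pos ⟨hc, le_rfl⟩]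
    have e2 : forcing p q p.1.2 = q.1.1 := by
      rw [forcing, if_neg hnc, if_neg]
      rintro ⟨-, hh⟩
      exact absurd hh (not_le.2 p.2.1)
    rwa [e1, e2] at key

end Cong

/-- If every sup-irreducible element below `x` is below `y`, then `x ≤ y`. -/
lemma le_of_forall_supIrred_le {D : Type} [SemilatticeSup D] [OrderBot D] [WellFoundedLT D]
    {x y : D} (H : ∀ j : D, SupIrred j → j ≤ x → j ≤ y) : x ≤ y := by
  obtain ⟨s, hs, hirr⟩ := exists_supIrred_decomposition x
  rw [← hs]
  exact Finset.sup_le fun b hb => H b (hirr hb) (hs ▸ Finset.le_sup (f := id) hb)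

/-- The map `φ(x) = {(u,v) : σ(q) ≤ x for all prime intervals q of [u⊓v, u⊔v]}`
is a lattice isomorphism from `D` onto the congruence lattice of the forcing
algebra. -/
theorem stmt_14 (C : Type) [LinearOrder C] [Fintype C]
    {D : Type} [DistribLattice D] [Fintype D] [BoundedOrder D]
    (σ : PrimeInt C → D) (hJ : ∀ e : PrimeInt C, SupIrred (σ e))
    (hsurj : ∀ x : D, SupIrred x → ∃ e : PrimeInt C, σ e = x) :
    ∃ φ : D ≃o AlgCon (forcingAlg C σ),
      ∀ (x : D) (u v : C),
        (φ x).1 u v ↔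
          ∀ q : PrimeInt C, u ⊓ v ≤ q.1.1 → q.1.2 ≤ u ⊔ v → σ q ≤ x := by
  classical
  -- the inverse map
  set ψ : AlgCon (forcingAlg C σ) → D :=
    fun θ => (Finset.univ.filter fun q : PrimeInt C => θ.1 q.1.1 q.1.2).sup σ with hψ
  have hmem : ∀ (θ : AlgCon (forcingAlg C σ)) (q : PrimeInt C), θ.1 q.1.1 q.1.2 → σ q ≤ ψ θ :=
    fun θ q hq => Finset.le_sup (Finset.mem_filter.2 ⟨Finset.mem_univ _, hq⟩)
  have hRψ : ∀ (θ : AlgCon (forcingAlg C σ)) (q : PrimeInt C), σ q ≤ ψ θ → θ.1 q.1.1 q.1.2 := by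
    intro θ q hq
    obtain ⟨p, hpmem, hple⟩ := ((hJ q).supPrime.le_finset_sup).1 hq
    have hpθ : θ.1 p.1.1 p.1.2 := (Finset.mem_filter.1 hpmem).2
    by_cases hpq : p = q
    · exact hpq ▸ hpθ
    · exact cong_forcing_collapse θ hpθ hpq hple
  refine ⟨{ toFun := fun x => ⟨@Rrel C _ D _ σ x, Rrel_isCong σ x⟩,
            invFun := ψ,
            left_inv := ?_, right_inv := ?_, map_rel_iff' := ?_ },
          fun x u v => Iff.rfl⟩
  · -- left inverse : ψ (φ x) = x
    intro x
    apply le_antisymm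
    · refine Finset.sup_le fun q hq => ?_
      exact (Rrel_prime_iff q).1 (Finset.mem_filter.1 hq).2
    · refine le_of_forall_supIrred_le fun j hj hjx => ?_
      obtain ⟨e, rfl⟩ := hsurj j hj
      exact Finset.le_sup (Finset.mem_filter.2 ⟨Finset.mem_univ _, (Rrel_prime_iff e).2 hjx⟩)
  · -- right inverse : φ (ψ θ) = θ
    intro θ
    apply Subtype.ext
    show (@Rrel C _ D _ σ (ψ θ)) = θ.1
    funext u v
    apply propext
    constructor
    · intro hr
      obtain ⟨m, M, hm, hM⟩ : ∃ m M : C, m = u ⊓ v ∧ M = u ⊔ v := ⟨_, _, rfl, rfl⟩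
      have hmM : θ.1 m M := by
        refine rel_of_primes (C := C) (r := fun a b : C => θ.1 a b)
          (fun a => θ.2.1.refl a) (fun h1 h2 => θ.2.1.trans h1 h2)
          (Fintype.card C) m M (Finset.card_le_univ _)
          (by rw [hm, hM]; exact inf_le_sup) fun q hq1 hq2 => ?_
        refine hRψ θ q (hr q ?_ ?_)
        · rw [← hm]; exact hq1
        · rw [← hM]; exact hq2
      rw [hm, hM] at hmM
      rcases le_total u v with h | h
      · rwa [inf_eq_left.2 h, sup_eq_right.2 h] at hmM
      · rw [inf_eq_right.2 h, sup_eq_left.2 h] at hmM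
        exact θ.2.1.symm hmM
    · intro hθ q h1 h2
      obtain ⟨m, M, hm, hM⟩ : ∃ m M : C, m = u ⊓ v ∧ M = u ⊔ v := ⟨_, _, rfl, rfl⟩
      rw [← hm] at h1
      rw [← hM] at h2
      have hmM : θ.1 m M := by
        rw [hm, hM]
        rcases le_total u v with h | h
        · rwa [inf_eq_left.2 h, sup_eq_right.2 h]
        · rw [inf_eq_right.2 h, sup_eq_left.2 h]
          exact θ.2.1.symm hθ
      exact hmem θ q (cong_prime_collapse θ hmM q h1 h2)
  · -- map_rel_iff
    intro x y
    constructor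
    · intro H
      refine le_of_forall_supIrred_le fun j hj hjx => ?_
      obtain ⟨e, rfl⟩ := hsurj j hj
      exact (Rrel_prime_iff e).1 (H e.1.1 e.1.2 ((Rrel_prime_iff e).2 hjx))
    · intro hxy a b hr q h1 h2
      exact (hr q h1 h2).trans hxy
end

section
/- Let Q be a subset of a finite distributive lattice D such that the inclusion Q ⊆ D is chain-representable by a J(D)-colored chain (C, σ). Then there is a finite algebra A with |A| = |C| and a lattice isomorphism φ: Con(A) → D such that φ(Princ(A)) = Q. -/
set_option linter.unusedVariables false

open scoped Classical

section Construction

variable {C D : Type} [LinearOrder C] [Fintype C]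
  [DistribLattice D] [Fintype D] [BoundedOrder D]

noncomputable instance : LocallyFiniteOrder C := Fintype.toLocallyFiniteOrder

lemma cov_le (f : PrimeInt C) {b : C} (h : f.1.1 < b) : f.1.2 ≤ b := by
  by_contra h'
  exact f.2.2 h (not_le.1 h')

lemma le_cov (f : PrimeInt C) {b : C} (h : b < f.1.2) : b ≤ f.1.1 := by
  by_contra h'
  exact f.2.2 (not_le.1 h') h

lemma prime_eq (e f : PrimeInt C) (h1 : e.1.1 ≤ f.1.1) (h2 : f.1.2 ≤ e.1.2) : f = e := by
  have hf : f.1.1 < f.1.2 := f.2.1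
  have h3 : f.1.1 ≤ e.1.1 := le_cov e (lt_of_lt_of_le hf h2)
  have h5 : e.1.1 < f.1.2 := lt_of_le_of_lt h1 hf
  have h6 : e.1.2 ≤ f.1.2 := cov_le e h5
  apply Subtype.ext
  have : f.1.1 = e.1.1 := le_antisymm h3 h1
  have : f.1.2 = e.1.2 := le_antisymm h2 h6
  exact Prod.ext ‹f.1.1 = e.1.1› ‹f.1.2 = e.1.2›

lemma chainRep_prime (σ : PrimeInt C → D) (e : PrimeInt C) :
    chainRep σ e.1.1 e.1.2 = σ e := by
  apply le_antisymm
  · refine Finset.sup_le fun f hf => ?_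
    simp only [Finset.mem_filter, Finset.mem_univ, true_and] at hf
    rw [prime_eq e f hf.1 hf.2]
  · exact Finset.le_sup (Finset.mem_filter.2 ⟨Finset.mem_univ _, le_rfl, le_rfl⟩)

lemma chainRep_self_s16 (σ : PrimeInt C → D) (c : C) : chainRep σ c c = ⊥ := by
  refine le_antisymm (Finset.sup_le fun f hf => ?_) bot_le
  simp only [Finset.mem_filter, Finset.mem_univ, true_and] at hf
  exact absurd (lt_of_lt_of_le f.2.1 (hf.2.trans hf.1)) (lt_irrefl _)

/-- The algebra on `C`: for each pair of prime intervals `(f, e)` with `σ e ≤ σ f`,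
a unary operation collapsing `f` onto `e`. -/
@[reducible] noncomputable def theAlg (σ : PrimeInt C → D) : Alg where
  carrier := C
  ι := {p : PrimeInt C × PrimeInt C // σ p.2 ≤ σ p.1}
  arity _ := 1
  ops i v := if v 0 ≤ i.1.1.1.1 then i.1.2.1.1 else i.1.2.1.2

lemma theta_trans_aux (σ : PrimeInt C → D) {d : D} {a b c : C}
    (h1 : chainRep σ (a ⊓ b) (a ⊔ b) ≤ d) (h2 : chainRep σ (b ⊓ c) (b ⊔ c) ≤ d) :
    chainRep σ (a ⊓ c) (a ⊔ c) ≤ d := by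
  refine Finset.sup_le fun f hf => ?_
  simp only [Finset.mem_filter, Finset.mem_univ, true_and] at hf
  obtain ⟨hf1, hf2⟩ := hf
  by_cases hb : f.1.2 ≤ b
  · rcases le_total a c with hac | hac
    · refine le_trans (Finset.le_sup (Finset.mem_filter.2 ⟨Finset.mem_univ _, ?_, ?_⟩)) h1
      · exact le_trans (le_trans inf_le_left (le_inf le_rfl hac)) hf1
      · exact hb.trans le_sup_right
    · refine le_trans (Finset.le_sup (Finset.mem_filter.2 ⟨Finset.mem_univ _, ?_, ?_⟩)) h2
      · exact le_trans (le_trans inf_le_right (le_inf hac le_rfl)) hf1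
      · exact hb.trans le_sup_left
  · have hbf : b ≤ f.1.1 := le_cov f (not_le.1 hb)
    rcases le_total a c with hac | hac
    · refine le_trans (Finset.le_sup (Finset.mem_filter.2 ⟨Finset.mem_univ _, ?_, ?_⟩)) h2
      · exact inf_le_left.trans hbf
      · exact hf2.trans ((sup_le hac le_rfl).trans le_sup_right)
    · refine le_trans (Finset.le_sup (Finset.mem_filter.2 ⟨Finset.mem_univ _, ?_, ?_⟩)) h1
      · exact inf_le_right.trans hbf
      · exact hf2.trans ((sup_le le_rfl hac).trans le_sup_left)

lemma step (σ : PrimeInt C → D) (d : D) (f e : PrimeInt C) (hfe : σ e ≤ σ f)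
    (a b : C) (hab : a ≤ b) (h : chainRep σ a b ≤ d) :
    chainRep σ ((if a ≤ f.1.1 then e.1.1 else e.1.2) ⊓ (if b ≤ f.1.1 then e.1.1 else e.1.2))
      ((if a ≤ f.1.1 then e.1.1 else e.1.2) ⊔ (if b ≤ f.1.1 then e.1.1 else e.1.2)) ≤ d := by
  by_cases hb : b ≤ f.1.1
  · rw [if_pos (hab.trans hb), if_pos hb, inf_idem, sup_idem, chainRep_self_s16]
    exact bot_le
  · by_cases ha : a ≤ f.1.1
    · rw [if_pos ha, if_neg hb]
      have hee : e.1.1 ≤ e.1.2 := e.2.1.le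
      rw [inf_eq_left.2 hee, sup_eq_right.2 hee, chainRep_prime]
      have hfb : f.1.2 ≤ b := cov_le f (not_le.1 hb)
      have hfc : σ f ≤ chainRep σ a b :=
        Finset.le_sup (Finset.mem_filter.2 ⟨Finset.mem_univ _, ha, hfb⟩)
      exact hfe.trans (hfc.trans h)
    · rw [if_neg ha, if_neg hb, inf_idem, sup_idem, chainRep_self_s16]
      exact bot_le

/-- The congruence of `theAlg σ` associated to `d : D`. -/
noncomputable def theta (σ : PrimeInt C → D) (d : D) : AlgCon (theAlg σ) :=
  ⟨fun a b => chainRep σ (a ⊓ b) (a ⊔ b) ≤ d, by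
    constructor
    · constructor
      · intro a
        show chainRep σ (a ⊓ a) (a ⊔ a) ≤ d
        rw [inf_idem, sup_idem, chainRep_self_s16]
        exact bot_le
      · intro a b h
        show chainRep σ (b ⊓ a) (b ⊔ a) ≤ d
        rwa [inf_comm, sup_comm]
      · intro a b c h1 h2
        exact theta_trans_aux σ h1 h2
    · rintro ⟨⟨f, e⟩, hfe⟩ x y hxy
      have h0 : chainRep σ (x 0 ⊓ y 0) (x 0 ⊔ y 0) ≤ d := hxy 0
      show chainRep σ
        ((if x 0 ≤ f.1.1 then e.1.1 else e.1.2) ⊓ (if y 0 ≤ f.1.1 then e.1.1 else e.1.2))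
        ((if x 0 ≤ f.1.1 then e.1.1 else e.1.2) ⊔ (if y 0 ≤ f.1.1 then e.1.1 else e.1.2)) ≤ d
      rcases le_total (x 0) (y 0) with hxy0 | hxy0
      · exact step σ d f e hfe (x 0) (y 0) hxy0
          (by rwa [inf_eq_left.2 hxy0, sup_eq_right.2 hxy0] at h0)
      · have := step σ d f e hfe (y 0) (x 0) hxy0
          (by rwa [inf_eq_right.2 hxy0, sup_eq_left.2 hxy0] at h0)
        rwa [inf_comm, sup_comm] at this⟩

lemma theta_rel (σ : PrimeInt C → D) (d : D) (a b : C) :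
    (theta σ d).1 a b ↔ chainRep σ (a ⊓ b) (a ⊔ b) ≤ d := Iff.rfl

lemma theta_mono (σ : PrimeInt C → D) {d d' : D} (h : d ≤ d') :
    theta σ d ≤ theta σ d' := fun _ _ hab => le_trans hab h

/-- The element of `D` associated to a congruence: the join of the colors of all
collapsed prime intervals. -/
noncomputable def rho (σ : PrimeInt C → D) (r : AlgCon (theAlg σ)) : D :=
  (Finset.univ.filter (fun e : PrimeInt C => r.1 e.1.1 e.1.2)).sup σ

lemma rho_mono (σ : PrimeInt C → D) {r s : AlgCon (theAlg σ)} (h : r ≤ s) :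
    rho σ r ≤ rho σ s := by
  refine Finset.sup_le fun e he => ?_
  simp only [Finset.mem_filter, Finset.mem_univ, true_and] at he
  exact Finset.le_sup (Finset.mem_filter.2 ⟨Finset.mem_univ _, h _ _ he⟩)

/-- Any congruence collapsing a pair collapses every prime interval between them. -/
lemma prime_mem (σ : PrimeInt C → D) (r : AlgCon (theAlg σ)) {a b : C} (hab : r.1 a b)
    (e : PrimeInt C) (h1 : a ⊓ b ≤ e.1.1) (h2 : e.1.2 ≤ a ⊔ b) : r.1 e.1.1 e.1.2 := by
  have key := r.2.2 ⟨(e, e), le_rfl⟩ (fun _ => a) (fun _ => b) (fun _ => hab)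
  have hee : e.1.1 < e.1.2 := e.2.1
  rcases le_total a b with h | h
  · have ha : a ≤ e.1.1 := inf_eq_left.2 h ▸ h1
    have hb : ¬ b ≤ e.1.1 := not_le.2 (lt_of_lt_of_le hee (sup_eq_right.2 h ▸ h2))
    simpa only [theAlg, if_pos ha, if_neg hb] using key
  · have hb : b ≤ e.1.1 := inf_eq_right.2 h ▸ h1
    have ha : ¬ a ≤ e.1.1 := not_le.2 (lt_of_lt_of_le hee (sup_eq_left.2 h ▸ h2))
    exact r.2.1.symm (by simpa only [theAlg, if_neg ha, if_pos hb] using key)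

/-- Collapsing a prime interval forces collapsing every prime interval of smaller color. -/
lemma lower (σ : PrimeInt C → D) (r : AlgCon (theAlg σ)) (f e : PrimeInt C)
    (hfe : σ e ≤ σ f) (h : r.1 f.1.1 f.1.2) : r.1 e.1.1 e.1.2 := by
  have key := r.2.2 ⟨(f, e), hfe⟩ (fun _ => f.1.1) (fun _ => f.1.2) (fun _ => h)
  have h1 : f.1.1 ≤ f.1.1 := le_rfl
  have h2 : ¬ f.1.2 ≤ f.1.1 := not_le.2 f.2.1
  simpa only [theAlg, if_pos h1, if_neg h2] using key

/-- If every prime interval inside `[u, v]` is collapsed by `r`, then so is `(u, v)`. -/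
lemma chain_trans (σ : PrimeInt C → D) (r : AlgCon (theAlg σ)) (u v : C) (huv : u ≤ v)
    (h : ∀ e : PrimeInt C, u ≤ e.1.1 → e.1.2 ≤ v → r.1 e.1.1 e.1.2) : r.1 u v := by
  suffices H : ∀ n, ∀ u v : C, (Finset.Ioc u v).card ≤ n → u ≤ v →
      (∀ e : PrimeInt C, u ≤ e.1.1 → e.1.2 ≤ v → r.1 e.1.1 e.1.2) → r.1 u v from
    H _ u v le_rfl huv h
  intro n
  induction n with
  | zero =>
    intro u v hc huv _
    rcases eq_or_lt_of_le huv with rfl | hlt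
    · exact r.2.1.refl u
    · have : v ∈ Finset.Ioc u v := Finset.mem_Ioc.2 ⟨hlt, le_rfl⟩
      have := Finset.card_pos.2 ⟨v, this⟩
      omega
  | succ n ih =>
    intro u v hc huv h
    rcases eq_or_lt_of_le huv with rfl | hlt
    · exact r.2.1.refl u
    · have hne : (Finset.Ioc u v).Nonempty := ⟨v, Finset.mem_Ioc.2 ⟨hlt, le_rfl⟩⟩
      set w := (Finset.Ioc u v).min' hne with hw
      have hwm' := (Finset.Ioc u v).min'_mem hne
      rw [Finset.mem_Ioc] at hwm'
      have cov : u ⋖ w := by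
        refine ⟨hwm'.1, fun c hc1 hc2 => ?_⟩
        have : w ≤ c := Finset.min'_le _ c (Finset.mem_Ioc.2 ⟨hc1, hc2.le.trans hwm'.2⟩)
        exact absurd hc2 (not_lt.2 this)
      have h1 : r.1 u w := h ⟨(u, w), cov⟩ le_rfl hwm'.2
      have hsubset : Finset.Ioc w v ⊆ Finset.Ioc u v := fun z hz => by
        rw [Finset.mem_Ioc] at hz ⊢
        exact ⟨hwm'.1.trans hz.1, hz.2⟩
      have hwnot : w ∉ Finset.Ioc w v := by simp [Finset.mem_Ioc]
      have hcard : (Finset.Ioc w v).card < (Finset.Ioc u v).card :=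
        Finset.card_lt_card ((Finset.ssubset_iff_of_subset hsubset).2
          ⟨w, Finset.mem_Ioc.2 ⟨hwm'.1, hwm'.2⟩, hwnot⟩)
      have h2 : r.1 w v := ih w v (by omega) hwm'.2
        (fun e he1 he2 => h e (hwm'.1.le.trans he1) he2)
      exact r.2.1.trans h1 h2

lemma theta_rho (σ : PrimeInt C → D) (hJ : ∀ e : PrimeInt C, SupIrred (σ e))
    (r : AlgCon (theAlg σ)) : theta σ (rho σ r) = r := by
  apply Subtype.ext
  funext a b
  apply propext
  constructor
  · intro h
    have key : ∀ e : PrimeInt C, a ⊓ b ≤ e.1.1 → e.1.2 ≤ a ⊔ b → r.1 e.1.1 e.1.2 := by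
      intro e he1 he2
      have hse : σ e ≤ rho σ r :=
        le_trans (Finset.le_sup (Finset.mem_filter.2 ⟨Finset.mem_univ _, he1, he2⟩)) h
      obtain ⟨f, hf, hef⟩ := (supPrime_iff_supIrred.2 (hJ e)).le_finset_sup.1 hse
      simp only [Finset.mem_filter, Finset.mem_univ, true_and] at hf
      exact lower σ r f e hef hf
    have hr : r.1 (a ⊓ b) (a ⊔ b) := chain_trans σ r _ _ inf_le_sup key
    rcases le_total a b with hab | hab
    · rwa [inf_eq_left.2 hab, sup_eq_right.2 hab] at hr
    · rw [inf_eq_right.2 hab, sup_eq_left.2 hab] at hr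
      exact r.2.1.symm hr
  · intro h
    refine Finset.sup_le fun e he => ?_
    simp only [Finset.mem_filter, Finset.mem_univ, true_and] at he
    exact Finset.le_sup
      (Finset.mem_filter.2 ⟨Finset.mem_univ _, prime_mem σ r h e he.1 he.2⟩)

lemma rho_theta (σ : PrimeInt C → D)
    (hsurj : ∀ x : D, SupIrred x → ∃ e : PrimeInt C, σ e = x) (d : D) :
    rho σ (theta σ d) = d := by
  apply le_antisymm
  · refine Finset.sup_le fun e he => ?_
    simp only [Finset.mem_filter, Finset.mem_univ, true_and] at he
    have hle : e.1.1 ≤ e.1.2 := e.2.1.le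
    rw [theta_rel, inf_eq_left.2 hle, sup_eq_right.2 hle, chainRep_prime] at he
    exact he
  · obtain ⟨s, hsup, hirr⟩ := exists_supIrred_decomposition d
    conv_lhs => rw [← hsup]
    refine Finset.sup_le fun b hb => ?_
    obtain ⟨e, rfl⟩ := hsurj b (hirr hb)
    have hbd : σ e ≤ d := by
      have := Finset.le_sup (f := id) hb
      rwa [hsup] at this
    have hle : e.1.1 ≤ e.1.2 := e.2.1.le
    show σ e ≤ rho σ (theta σ d)
    unfold rho
    refine Finset.le_sup (f := σ) (Finset.mem_filter.2 ⟨Finset.mem_univ _, ?_⟩)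
    rw [theta_rel, inf_eq_left.2 hle, sup_eq_right.2 hle, chainRep_prime]
    exact hbd

/-- The order isomorphism `D ≃o Con(theAlg σ)`. -/
noncomputable def psi (σ : PrimeInt C → D) (hJ : ∀ e : PrimeInt C, SupIrred (σ e))
    (hsurj : ∀ x : D, SupIrred x → ∃ e : PrimeInt C, σ e = x) :
    D ≃o AlgCon (theAlg σ) where
  toFun := theta σ
  invFun := rho σ
  left_inv := rho_theta σ hsurj
  right_inv := theta_rho σ hJ
  map_rel_iff' := by
    intro d d'
    constructor
    · intro h
      have := rho_mono σ (r := theta σ d) (s := theta σ d') h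
      rwa [rho_theta σ hsurj, rho_theta σ hsurj] at this
    · exact fun h => theta_mono σ h

lemma algPrinc_eq (σ : PrimeInt C → D) (hJ : ∀ e : PrimeInt C, SupIrred (σ e))
    (a b : C) :
    algPrinc (theAlg σ) a b = theta σ (chainRep σ (a ⊓ b) (a ⊔ b)) := by
  apply le_antisymm
  · exact sInf_le (show chainRep σ (a ⊓ b) (a ⊔ b) ≤ chainRep σ (a ⊓ b) (a ⊔ b) from le_rfl)
  · have hab : (algPrinc (theAlg σ) a b).1 a b := fun r hr => hr
    have h2 : chainRep σ (a ⊓ b) (a ⊔ b) ≤ rho σ (algPrinc (theAlg σ) a b) := by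
      refine Finset.sup_le fun e he => ?_
      simp only [Finset.mem_filter, Finset.mem_univ, true_and] at he
      exact Finset.le_sup (Finset.mem_filter.2
        ⟨Finset.mem_univ _, prime_mem σ _ hab e he.1 he.2⟩)
    calc theta σ (chainRep σ (a ⊓ b) (a ⊔ b))
        ≤ theta σ (rho σ (algPrinc (theAlg σ) a b)) := theta_mono σ h2
      _ = algPrinc (theAlg σ) a b := theta_rho σ hJ _

end Construction

/-- If the inclusion `Q ⊆ D` is chain-representable by a `J(D)`-colored chain
`(C, σ)`, then it is representable by the principal congruences of a finite
algebra with exactly `|C|` elements. -/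
theorem stmt_16 {D : Type} [DistribLattice D] [Fintype D] [BoundedOrder D]
    (Q : Set D) (C : Type) [LinearOrder C] [Fintype C] [Nonempty C]
    (σ : PrimeInt C → D) (hJ : ∀ e : PrimeInt C, SupIrred (σ e))
    (hsurj : ∀ x : D, SupIrred x → ∃ e : PrimeInt C, σ e = x)
    (hrep : repSet σ = Q) :
    ∃ (A : Alg) (_ : Fintype A.carrier) (φ : AlgCon A ≃o D),
      Nat.card A.carrier = Nat.card C ∧
      (φ : AlgCon A → D) '' (AlgPrinc A) = Q := by
  refine ⟨theAlg σ, (inferInstance : Fintype C), (psi σ hJ hsurj).symm, rfl, ?_⟩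
  rw [← hrep]
  ext x
  simp only [Set.mem_image, AlgPrinc, Set.mem_setOf_eq, repSet]
  constructor
  · rintro ⟨θ, ⟨a, b, rfl⟩, rfl⟩
    refine ⟨a ⊓ b, a ⊔ b, inf_le_sup, ?_⟩
    rw [algPrinc_eq σ hJ a b]
    exact rho_theta σ hsurj _
  · rintro ⟨a, b, hab, rfl⟩
    refine ⟨algPrinc (theAlg σ) a b, ⟨a, b, rfl⟩, ?_⟩
    rw [algPrinc_eq σ hJ a b, inf_eq_left.2 hab, sup_eq_right.2 hab]
    exact rho_theta σ hsurj _
end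

section
/- Let D be a finite distributive lattice with exactly two coatoms α and β that are both join-reducible. Then there is no algebra A with Con(A) ≅ D such that, under this isomorphism, Princ(A) corresponds to J(D) ∪ {0, 1, α ∧ β}, provided D is planar (equivalently, provided J(D) contains no three-element antichain). -/
set_option linter.unusedVariables false

/-! ### Auxiliary lattice-theoretic lemmas -/

private lemma exists_supIrred_le_not_le {D : Type} [DistribLattice D] [Fintype D]
    [BoundedOrder D] : ∀ (a b : D), ¬ a ≤ b → ∃ j : D, SupIrred j ∧ j ≤ a ∧ ¬ j ≤ b := by
  intro a
  induction a using WellFoundedLT.induction with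
  | _ a ih =>
    intro b hab
    by_cases hs : SupIrred a
    · exact ⟨a, hs, le_rfl, hab⟩
    · by_cases hmin : IsMin a
      · exact absurd (hmin.eq_bot ▸ bot_le) hab
      · have hex : ∃ u v : D, u ⊔ v = a ∧ u ≠ a ∧ v ≠ a := by
          by_contra h'
          push_neg at h'
          refine hs ⟨hmin, fun u v huv => ?_⟩
          by_contra hne'
          push_neg at hne'
          exact hne'.2 (h' u v huv hne'.1)
        obtain ⟨u, v, huv, hu, hv⟩ := hex
        have hult : u < a := lt_of_le_of_ne (huv ▸ le_sup_left) hu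
        have hvlt : v < a := lt_of_le_of_ne (huv ▸ le_sup_right) hv
        by_cases hub : u ≤ b
        · have hvb : ¬ v ≤ b := fun h => hab (huv ▸ sup_le hub h)
          obtain ⟨j, hj⟩ := ih v hvlt b hvb
          exact ⟨j, hj.1, hj.2.1.trans hvlt.le, hj.2.2⟩
        · obtain ⟨j, hj⟩ := ih u hult b hub
          exact ⟨j, hj.1, hj.2.1.trans hult.le, hj.2.2⟩

private lemma exists_pmax {D : Type} [DistribLattice D] [Fintype D] [BoundedOrder D]
    (c₁ c₂ : D) (hc12 : ¬ c₁ ≤ c₂) (hc21 : ¬ c₂ ≤ c₁)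
    (hplanar : ¬ ∃ p₀ p₁ p₂ : D, SupIrred p₀ ∧ SupIrred p₁ ∧ SupIrred p₂ ∧
      ¬ p₀ ≤ p₁ ∧ ¬ p₁ ≤ p₀ ∧ ¬ p₀ ≤ p₂ ∧ ¬ p₂ ≤ p₀ ∧ ¬ p₁ ≤ p₂ ∧ ¬ p₂ ≤ p₁) :
    ∃ p : D, SupIrred p ∧ p ≤ c₁ ∧ ¬ p ≤ c₁ ⊓ c₂ ∧
      ∀ x : D, SupIrred x → x ≤ c₁ → ¬ x ≤ c₁ ⊓ c₂ → x ≤ p := by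
  classical
  set P : Set D := {x | SupIrred x ∧ x ≤ c₁ ∧ ¬ x ≤ c₁ ⊓ c₂} with hP
  have hPne : P.Nonempty := by
    obtain ⟨j, hj1, hj2, hj3⟩ := exists_supIrred_le_not_le c₁ (c₁ ⊓ c₂)
      (fun h => hc12 (h.trans inf_le_right))
    exact ⟨j, hj1, hj2, hj3⟩
  obtain ⟨p, hpP, hpmax⟩ := Set.Finite.exists_maximalFor id P (Set.toFinite P) hPne
  refine ⟨p, hpP.1, hpP.2.1, hpP.2.2, ?_⟩
  intro x hx1 hx2 hx3
  by_contra hxp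
  have hpx : ¬ p ≤ x := by
    intro h
    exact hxp (hpmax ⟨hx1, hx2, hx3⟩ h)
  obtain ⟨r, hr1, hr2, hr3⟩ := exists_supIrred_le_not_le c₂ c₁ hc21
  refine hplanar ⟨p, x, r, hpP.1, hx1, hr1, hpx, hxp, ?_, ?_, ?_, ?_⟩
  · intro h
    exact hpP.2.2 (le_inf hpP.2.1 (h.trans hr2))
  · intro h
    exact hr3 (h.trans hpP.2.1)
  · intro h
    exact hx3 (le_inf hx2 (h.trans hr2))
  · intro h
    exact hr3 (h.trans hx2)

/-! ### Auxiliary congruence-theoretic lemmas -/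

private lemma mem_algPrinc_self (A : Alg) (x y : A.carrier) : (algPrinc A x y).1 x y :=
  fun _ hr => hr

private lemma algPrinc_le_iff {A : Alg} {x y : A.carrier} {θ : AlgCon A} :
    algPrinc A x y ≤ θ ↔ θ.1 x y :=
  ⟨fun h => h x y (mem_algPrinc_self A x y), fun h a b hab => hab θ h⟩

private def topCong (A : Alg) : AlgCon A :=
  ⟨fun _ _ => True, ⟨⟨fun _ => trivial, fun _ => trivial, fun _ _ => trivial⟩,
    fun _ _ _ _ => trivial⟩⟩

private lemma top_total (A : Alg) (x y : A.carrier) : (⊤ : AlgCon A).1 x y :=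
  (le_top (a := topCong A)) x y trivial

private def JoinRel {A : Alg} (θ ψ : AlgCon A) : A.carrier → A.carrier → Prop :=
  Relation.ReflTransGen (fun u v => θ.1 u v ∨ ψ.1 u v)

private lemma joinRel_symm {A : Alg} (θ ψ : AlgCon A) {x y : A.carrier}
    (h : JoinRel θ ψ x y) : JoinRel θ ψ y x := by
  induction h with
  | refl => exact Relation.ReflTransGen.refl
  | tail h₁ h₂ ih =>
      exact Relation.ReflTransGen.trans
        (Relation.ReflTransGen.single (h₂.imp θ.2.1.symm ψ.2.1.symm)) ih

private lemma joinRel_update {A : Alg} (θ ψ : AlgCon A) (i : A.ι)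
    (x : Fin (A.arity i) → A.carrier) (j : Fin (A.arity i)) {b : A.carrier}
    (h : JoinRel θ ψ (x j) b) :
    JoinRel θ ψ (A.ops i x) (A.ops i (Function.update x j b)) := by
  induction h with
  | refl => rw [Function.update_eq_self]; exact Relation.ReflTransGen.refl
  | @tail c d hc hstep ih =>
      refine Relation.ReflTransGen.tail ih ?_
      have hgen : ∀ (r : AlgCon A), r.1 c d →
          r.1 (A.ops i (Function.update x j c)) (A.ops i (Function.update x j d)) := by
        intro r hr
        apply r.2.2 i
        intro k
        by_cases hk : k = j
        · subst hk
          simpa [Function.update_self] using hr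
        · rw [Function.update_of_ne hk, Function.update_of_ne hk]
          exact r.2.1.refl _
      exact hstep.imp (hgen θ) (hgen ψ)

private lemma joinRel_ops {A : Alg} (θ ψ : AlgCon A) (i : A.ι)
    (x y : Fin (A.arity i) → A.carrier)
    (h : ∀ j, JoinRel θ ψ (x j) (y j)) : JoinRel θ ψ (A.ops i x) (A.ops i y) := by
  have key : ∀ k : ℕ, k ≤ A.arity i →
      JoinRel θ ψ (A.ops i x) (A.ops i (fun j => if (j : ℕ) < k then y j else x j)) := by
    intro k
    induction k with
    | zero =>
        intro _
        have hx : (fun j : Fin (A.arity i) => if (j : ℕ) < 0 then y j else x j) = x := by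
          funext j; simp
        rw [hx]; exact Relation.ReflTransGen.refl
    | succ k ih =>
        intro hk
        have hk' : k ≤ A.arity i := Nat.le_of_succ_le hk
        have hklt : k < A.arity i := hk
        set jk : Fin (A.arity i) := ⟨k, hklt⟩ with hjk
        set vk : Fin (A.arity i) → A.carrier :=
          (fun j => if (j : ℕ) < k then y j else x j) with hvk
        have hval : vk jk = x jk := by simp [hvk, hjk]
        have hstep : JoinRel θ ψ (A.ops i vk) (A.ops i (Function.update vk jk (y jk))) := by
          apply joinRel_update
          rw [hval]
          exact h jk
        have heq : Function.update vk jk (y jk) =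
            (fun j : Fin (A.arity i) => if (j : ℕ) < k + 1 then y j else x j) := by
          funext j
          by_cases hj : j = jk
          · subst hj
            simp [Function.update_self, hjk]
          · rw [Function.update_of_ne hj]
            by_cases h2 : (j : ℕ) < k
            · simp [hvk, h2, Nat.lt_succ_of_lt h2]
            · have h3 : ¬ (j : ℕ) < k + 1 := by
                intro hlt
                rcases Nat.lt_succ_iff_lt_or_eq.mp hlt with h4 | h4
                · exact h2 h4
                · exact hj (Fin.ext h4)
              simp [hvk, h2, h3]
        rw [heq] at hstep
        exact (ih hk').trans hstep
  have hfin := key (A.arity i) le_rfl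
  have hy : (fun j : Fin (A.arity i) => if (j : ℕ) < A.arity i then y j else x j) = y := by
    funext j; simp [j.isLt]
  rwa [hy] at hfin

private def joinCong {A : Alg} (θ ψ : AlgCon A) : AlgCon A :=
  ⟨JoinRel θ ψ, ⟨⟨fun _ => Relation.ReflTransGen.refl, fun h => joinRel_symm θ ψ h,
    fun h1 h2 => h1.trans h2⟩, joinRel_ops θ ψ⟩⟩

private lemma sup_le_joinCong {A : Alg} (θ ψ : AlgCon A) : θ ⊔ ψ ≤ joinCong θ ψ :=
  sup_le (fun a b h => Relation.ReflTransGen.single (Or.inl h))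
    (fun a b h => Relation.ReflTransGen.single (Or.inr h))

/-- If a finite distributive lattice `D` has exactly two coatoms `c₁` and `c₂`,
both join-reducible, and `J(D)` contains no three-element antichain (i.e. `D` is
planar), then no algebra represents the inclusion
`J(D) ∪ {⊥, ⊤, c₁ ⊓ c₂} ⊆ D` by principal congruences. -/
theorem stmt_17 {D : Type} [DistribLattice D] [Fintype D] [BoundedOrder D]
    (c₁ c₂ : D) (hne : c₁ ≠ c₂) (h₁ : IsCoatom c₁) (h₂ : IsCoatom c₂)
    (honly : ∀ x : D, IsCoatom x → x = c₁ ∨ x = c₂)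
    (hred₁ : ∃ a b : D, a < c₁ ∧ b < c₁ ∧ a ⊔ b = c₁)
    (hred₂ : ∃ a b : D, a < c₂ ∧ b < c₂ ∧ a ⊔ b = c₂)
    (hplanar : ¬ ∃ p₀ p₁ p₂ : D, SupIrred p₀ ∧ SupIrred p₁ ∧ SupIrred p₂ ∧
      ¬ p₀ ≤ p₁ ∧ ¬ p₁ ≤ p₀ ∧ ¬ p₀ ≤ p₂ ∧ ¬ p₂ ≤ p₀ ∧ ¬ p₁ ≤ p₂ ∧ ¬ p₂ ≤ p₁) :
    ¬ ∃ (A : Alg) (φ : AlgCon A ≃o D),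
        (φ : AlgCon A → D) '' (AlgPrinc A) =
          {x : D | SupIrred x} ∪ {⊥, ⊤, c₁ ⊓ c₂} := by
  rintro ⟨A, φ, himg⟩
  classical
  -- the two coatoms are incomparable
  have hc12 : ¬ c₁ ≤ c₂ := by
    intro h
    rcases lt_or_eq_of_le h with hlt | heq
    · exact h₂.1 (h₁.2 c₂ hlt)
    · exact hne heq
  have hc21 : ¬ c₂ ≤ c₁ := by
    intro h
    rcases lt_or_eq_of_le h with hlt | heq
    · exact h₁.1 (h₂.2 c₁ hlt)
    · exact hne heq.symm
  -- maximal join-irreducibles `p₁ ≤ c₁` and `q₁ ≤ c₂` not below `c₁ ⊓ c₂`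
  obtain ⟨p₁, hpirr, hple, hpnm, hpmax⟩ := exists_pmax c₁ c₂ hc12 hc21 hplanar
  obtain ⟨q₁, hqirr, hqle, hqnm', hqmax'⟩ := exists_pmax c₂ c₁ hc21 hc12 hplanar
  have hqnm : ¬ q₁ ≤ c₁ ⊓ c₂ := by
    rw [inf_comm]; exact hqnm'
  have hqmax : ∀ x : D, SupIrred x → x ≤ c₂ → ¬ x ≤ c₁ ⊓ c₂ → x ≤ q₁ := by
    intro x hx1 hx2 hx3
    exact hqmax' x hx1 hx2 (by rwa [inf_comm] at hx3)
  -- `c₁ ⊓ c₂` is not below `p₁` (else `p₁ = c₁` would be join-irreducible)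
  have hmp : ¬ c₁ ⊓ c₂ ≤ p₁ := by
    intro h
    have hall : ∀ j : D, SupIrred j → j ≤ c₁ → j ≤ p₁ := by
      intro j hj hjc
      by_cases hjm : j ≤ c₁ ⊓ c₂
      · exact hjm.trans h
      · exact hpmax j hj hjc hjm
    have hc₁p : c₁ ≤ p₁ := by
      by_contra hc
      obtain ⟨j, hj1, hj2, hj3⟩ := exists_supIrred_le_not_le c₁ p₁ hc
      exact hj3 (hall j hj1 hj2)
    have hpe : p₁ = c₁ := le_antisymm hple hc₁p
    obtain ⟨a, b, ha, hb, hab⟩ := hred₁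
    rcases (hpe ▸ hpirr).2 hab with h' | h'
    · exact ha.ne h'
    · exact hb.ne h'
  have hmq : ¬ c₁ ⊓ c₂ ≤ q₁ := by
    intro h
    have hall : ∀ j : D, SupIrred j → j ≤ c₂ → j ≤ q₁ := by
      intro j hj hjc
      by_cases hjm : j ≤ c₁ ⊓ c₂
      · exact hjm.trans h
      · exact hqmax j hj hjc hjm
    have hc₂q : c₂ ≤ q₁ := by
      by_contra hc
      obtain ⟨j, hj1, hj2, hj3⟩ := exists_supIrred_le_not_le c₂ q₁ hc
      exact hj3 (hall j hj1 hj2)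
    have hqe : q₁ = c₂ := le_antisymm hqle hc₂q
    obtain ⟨a, b, ha, hb, hab⟩ := hred₂
    rcases (hqe ▸ hqirr).2 hab with h' | h'
    · exact ha.ne h'
    · exact hb.ne h'
  -- `p₁ ⊔ q₁ = ⊤`
  have hpq : p₁ ⊔ q₁ = ⊤ := by
    rcases eq_top_or_exists_le_coatom (p₁ ⊔ q₁) with h | ⟨c, hc, hle⟩
    · exact h
    · exfalso
      rcases honly c hc with rfl | rfl
      · exact hqnm (le_inf (le_sup_right.trans hle) hqle)
      · exact hpnm (le_inf hple (le_sup_left.trans hle))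
  -- relating congruences and labels
  have key : ∀ (x y : A.carrier) (s : D), (φ.symm s).1 x y ↔ φ (algPrinc A x y) ≤ s := by
    intro x y s
    constructor
    · intro h
      have h2 : algPrinc A x y ≤ φ.symm s := algPrinc_le_iff.mpr h
      have h3 := φ.monotone h2
      rwa [φ.apply_symm_apply] at h3
    · intro h
      have h2 : algPrinc A x y ≤ φ.symm s := by
        have h3 := φ.symm.monotone h
        rwa [φ.symm_apply_apply] at h3
      exact algPrinc_le_iff.mp h2
  have hlabelmem : ∀ x y : A.carrier,
      φ (algPrinc A x y) ∈ ({x : D | SupIrred x} ∪ {⊥, ⊤, c₁ ⊓ c₂} : Set D) := by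
    intro x y
    rw [← himg]
    exact ⟨algPrinc A x y, ⟨x, y, rfl⟩, rfl⟩
  -- a pair whose principal congruence corresponds to `c₁ ⊓ c₂`
  obtain ⟨e, f, hef⟩ : ∃ e f : A.carrier, φ (algPrinc A e f) = c₁ ⊓ c₂ := by
    have hmem : c₁ ⊓ c₂ ∈ ({x : D | SupIrred x} ∪ {⊥, ⊤, c₁ ⊓ c₂} : Set D) := by
      right; simp
    rw [← himg] at hmem
    obtain ⟨Θ, hΘ1, hΘ2⟩ := hmem
    obtain ⟨e, f, rfl⟩ := hΘ1
    exact ⟨e, f, hΘ2⟩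
  -- key pointwise claims
  have claim1 : ∀ x y : A.carrier, (φ.symm c₁).1 x y → ¬ (φ.symm (c₁ ⊓ c₂)).1 x y →
      (φ.symm p₁).1 x y := by
    intro x y hα hm'
    have hlabα : φ (algPrinc A x y) ≤ c₁ := (key x y c₁).mp hα
    have hlabm : ¬ φ (algPrinc A x y) ≤ c₁ ⊓ c₂ := fun h => hm' ((key x y _).mpr h)
    have hlabp : φ (algPrinc A x y) ≤ p₁ := by
      rcases hlabelmem x y with hirr | hrest
      · exact hpmax _ hirr hlabα hlabm
      · simp only [Set.mem_insert_iff, Set.mem_singleton_iff] at hrest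
        rcases hrest with h | h | h
        · rw [h]; exact bot_le
        · exfalso; rw [h] at hlabα; exact h₁.1 (top_le_iff.mp hlabα)
        · exact absurd h.le hlabm
    exact (key x y p₁).mpr hlabp
  have claim2 : ∀ x y : A.carrier, (φ.symm c₂).1 x y → ¬ (φ.symm (c₁ ⊓ c₂)).1 x y →
      (φ.symm q₁).1 x y := by
    intro x y hα hm'
    have hlabα : φ (algPrinc A x y) ≤ c₂ := (key x y c₂).mp hα
    have hlabm : ¬ φ (algPrinc A x y) ≤ c₁ ⊓ c₂ := fun h => hm' ((key x y _).mpr h)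
    have hlabq : φ (algPrinc A x y) ≤ q₁ := by
      rcases hlabelmem x y with hirr | hrest
      · exact hqmax _ hirr hlabα hlabm
      · simp only [Set.mem_insert_iff, Set.mem_singleton_iff] at hrest
        rcases hrest with h | h | h
        · rw [h]; exact bot_le
        · exfalso; rw [h] at hlabα; exact h₂.1 (top_le_iff.mp hlabα)
        · exact absurd h.le hlabm
    exact (key x y q₁).mpr hlabq
  have hefm : (φ.symm (c₁ ⊓ c₂)).1 e f := (key e f _).mpr hef.le
  have hmono : ∀ {s t : D}, s ≤ t → ∀ a b : A.carrier,
      (φ.symm s).1 a b → (φ.symm t).1 a b := by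
    intro s t hst a b hab
    exact φ.symm.monotone hst a b hab
  -- main induction along chains
  have main : ∀ u : A.carrier, JoinRel (φ.symm p₁) (φ.symm q₁) e u →
      (φ.symm (c₁ ⊓ c₂)).1 e u := by
    intro u h
    induction h with
    | refl => exact (φ.symm (c₁ ⊓ c₂)).2.1.refl e
    | @tail x u hx hstep ih =>
        by_contra hnot
        rcases hstep with hp | hq
        · have heuα : (φ.symm c₁).1 e u :=
            (φ.symm c₁).2.1.trans (hmono inf_le_left e x ih) (hmono hple x u hp)
          have heup : (φ.symm p₁).1 e u := claim1 e u heuα hnot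
          have hfuα : (φ.symm c₁).1 f u :=
            (φ.symm c₁).2.1.trans
              (hmono inf_le_left f e ((φ.symm (c₁ ⊓ c₂)).2.1.symm hefm)) heuα
          have hfum : ¬ (φ.symm (c₁ ⊓ c₂)).1 f u := fun h' =>
            hnot ((φ.symm (c₁ ⊓ c₂)).2.1.trans hefm h')
          have hfup : (φ.symm p₁).1 f u := claim1 f u hfuα hfum
          have hefp : (φ.symm p₁).1 e f :=
            (φ.symm p₁).2.1.trans heup ((φ.symm p₁).2.1.symm hfup)
          have hle : c₁ ⊓ c₂ ≤ p₁ := by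
            have h2 := (key e f p₁).mp hefp
            rwa [hef] at h2
          exact hmp hle
        · have heuα : (φ.symm c₂).1 e u :=
            (φ.symm c₂).2.1.trans (hmono inf_le_right e x ih) (hmono hqle x u hq)
          have heuq : (φ.symm q₁).1 e u := claim2 e u heuα hnot
          have hfuα : (φ.symm c₂).1 f u :=
            (φ.symm c₂).2.1.trans
              (hmono inf_le_right f e ((φ.symm (c₁ ⊓ c₂)).2.1.symm hefm)) heuα
          have hfum : ¬ (φ.symm (c₁ ⊓ c₂)).1 f u := fun h' =>
            hnot ((φ.symm (c₁ ⊓ c₂)).2.1.trans hefm h')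
          have hfuq : (φ.symm q₁).1 f u := claim2 f u hfuα hfum
          have hefq : (φ.symm q₁).1 e f :=
            (φ.symm q₁).2.1.trans heuq ((φ.symm q₁).2.1.symm hfuq)
          have hle : c₁ ⊓ c₂ ≤ q₁ := by
            have h2 := (key e f q₁).mp hefq
            rwa [hef] at h2
          exact hmq hle
  -- conclude
  have hsupcon : (φ.symm p₁ ⊔ φ.symm q₁ : AlgCon A) = ⊤ := by
    rw [← OrderIso.map_sup φ.symm, hpq]
    exact OrderIso.map_top φ.symm
  have htotal : ∀ u : A.carrier, (φ.symm (c₁ ⊓ c₂)).1 e u := by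
    intro u
    apply main
    have h1 : (φ.symm p₁ ⊔ φ.symm q₁ : AlgCon A).1 e u := by
      rw [hsupcon]; exact top_total A e u
    exact sup_le_joinCong (φ.symm p₁) (φ.symm q₁) e u h1
  have hmtop : φ.symm (c₁ ⊓ c₂) = ⊤ := by
    apply top_unique
    intro x y _
    exact (φ.symm (c₁ ⊓ c₂)).2.1.trans
      ((φ.symm (c₁ ⊓ c₂)).2.1.symm (htotal x)) (htotal y)
  have htop : c₁ ⊓ c₂ = ⊤ := by
    have h2 := congrArg φ hmtop
    rwa [φ.apply_symm_apply, OrderIso.map_top φ] at h2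
  have h5 : (c₁ ⊓ c₂ : D) ≤ c₁ := inf_le_left
  rw [htop] at h5
  exact h₁.1 (top_le_iff.mp h5)
end
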